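/- arXiv:2509.13819 — 3 statements merged into one kernel-verified Lean document; each statement's English description precedes it below -/
import Mathlib

section
/- Let H be a finite hypergraph and let e0 ∈ E(H). Let H' be the hypergraph obtained from H by adding two new vertices x and y (not in V(H)) and replacing the edge e0 by the two edges e_x = e0 ∪ {x} and e_y = e0 ∪ {y}. Then Maker has a winning strategy for the Maker-Breaker game on H if and only if Maker has a winning strategy for the Maker-Breaker game on H'. -/
/-!
Formalization of finite positional games (Maker-Breaker and Maker-Maker) on hypergraphs.

A position of a game is recorded by the sets of vertices picked by each player so far,
together with a fuel parameter equal to the number of vertices still unpicked, and a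
Boolean recording whose turn it is (`true` = the first player, i.e. Maker/FP, to move).
The predicates below express, by recursion on the number of remaining moves, that the
corresponding player has a winning (resp. drawing) strategy from the given position.
-/

variable {α : Type} [DecidableEq α]

/-- A finite hypergraph: a finite vertex set `V` together with a finite set `E` of edges,
each edge being a subset of `V`. -/
structure FinHypergraph (α : Type) [DecidableEq α] where
  V : Finset α
  E : Finset (Finset α)
  edge_subset : ∀ e ∈ E, e ⊆ V

/-- A set `A` of picked vertices *fills* an edge of `H` if it contains that edge. -/
def Fills (H : FinHypergraph α) (A : Finset α) : Prop := ∃ e ∈ H.E, e ⊆ A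

/-- Maker has a winning strategy in the Maker-Breaker game on `H` from the position where
Maker has picked `M`, Breaker has picked `B`, there remain `n` unpicked vertices, and it is
Maker's (`true`) resp. Breaker's (`false`) turn.  Play continues until every vertex is
picked; Maker wins if in the end her picked vertices contain some edge. -/
def makerAux (H : FinHypergraph α) : ℕ → Finset α → Finset α → Bool → Prop
  | 0, M, _, _ => Fills H M
  | n+1, M, B, true => ∃ x ∈ H.V \ (M ∪ B), makerAux H n (insert x M) B false
  | n+1, M, B, false => ∀ x ∈ H.V \ (M ∪ B), makerAux H n M (insert x B) true

/-- Maker has a winning strategy for the Maker-Breaker game on `H` (Maker moves first). -/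
def MakerWin (H : FinHypergraph α) : Prop := makerAux H H.V.card ∅ ∅ true

/-- Breaker has a winning strategy in the Maker-Breaker game on `H` from the given position
(`true`: Maker to move).  Breaker wins if in the end Maker's vertices contain no edge. -/
def breakerAux (H : FinHypergraph α) : ℕ → Finset α → Finset α → Bool → Prop
  | 0, M, _, _ => ¬ Fills H M
  | n+1, M, B, true => ∀ x ∈ H.V \ (M ∪ B), breakerAux H n (insert x M) B false
  | n+1, M, B, false => ∃ x ∈ H.V \ (M ∪ B), breakerAux H n M (insert x B) true

/-- Breaker has a winning strategy for the Maker-Breaker game on `H` (Maker moves first). -/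
def BreakerWin (H : FinHypergraph α) : Prop := breakerAux H H.V.card ∅ ∅ true

/-- The first player FP has a winning strategy in the Maker-Maker game on `H` from the
position where FP has picked `F`, SP has picked `S`, there remain `n` unpicked vertices and
it is FP's (`true`) resp. SP's (`false`) turn.  Whoever first fills an edge wins;
a position in which the opponent has already filled an edge is lost. -/
def fpAux (H : FinHypergraph α) : ℕ → Finset α → Finset α → Bool → Prop
  | 0, F, S, true => ¬ Fills H S ∧ Fills H F
  | 0, F, _, false => Fills H F
  | n+1, F, S, true => ¬ Fills H S ∧
      (Fills H F ∨ ∃ x ∈ H.V \ (F ∪ S), fpAux H n (insert x F) S false)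
  | n+1, F, S, false => Fills H F ∨
      (¬ Fills H S ∧ ∀ x ∈ H.V \ (F ∪ S), fpAux H n F (insert x S) true)

/-- FP has a winning strategy for the Maker-Maker game on `H` (FP moves first). -/
def FPWin (H : FinHypergraph α) : Prop := fpAux H H.V.card ∅ ∅ true

/-- The second player SP has a winning strategy in the Maker-Maker game on `H` from the
given position (`true`: FP to move). -/
def spAux (H : FinHypergraph α) : ℕ → Finset α → Finset α → Bool → Prop
  | 0, _, S, true => Fills H S
  | 0, F, S, false => ¬ Fills H F ∧ Fills H S
  | n+1, F, S, true => Fills H S ∨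
      (¬ Fills H F ∧ ∀ x ∈ H.V \ (F ∪ S), spAux H n (insert x F) S false)
  | n+1, F, S, false => ¬ Fills H F ∧
      (Fills H S ∨ ∃ x ∈ H.V \ (F ∪ S), spAux H n F (insert x S) true)

/-- SP has a winning strategy for the Maker-Maker game on `H` (FP moves first). -/
def SPWin (H : FinHypergraph α) : Prop := spAux H H.V.card ∅ ∅ true

/-- FP has a *drawing* strategy in the Maker-Maker game on `H` from the given position:
FP can guarantee that SP does not win (FP winning, or nobody winning, are both fine). -/
def fpDrawAux (H : FinHypergraph α) : ℕ → Finset α → Finset α → Bool → Prop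
  | 0, _, S, true => ¬ Fills H S
  | 0, F, S, false => Fills H F ∨ ¬ Fills H S
  | n+1, F, S, true => ¬ Fills H S ∧
      (Fills H F ∨ ∃ x ∈ H.V \ (F ∪ S), fpDrawAux H n (insert x F) S false)
  | n+1, F, S, false => Fills H F ∨
      (¬ Fills H S ∧ ∀ x ∈ H.V \ (F ∪ S), fpDrawAux H n F (insert x S) true)

/-- FP has a drawing strategy for the Maker-Maker game on `H` (FP moves first). -/
def FPDraw (H : FinHypergraph α) : Prop := fpDrawAux H H.V.card ∅ ∅ true

/-- SP has a *drawing* strategy in the Maker-Maker game on `H` from the given position: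
SP can guarantee that FP does not win (SP winning, or nobody winning, are both fine). -/
def spDrawAux (H : FinHypergraph α) : ℕ → Finset α → Finset α → Bool → Prop
  | 0, F, S, true => Fills H S ∨ ¬ Fills H F
  | 0, F, _, false => ¬ Fills H F
  | n+1, F, S, true => Fills H S ∨
      (¬ Fills H F ∧ ∀ x ∈ H.V \ (F ∪ S), spDrawAux H n (insert x F) S false)
  | n+1, F, S, false => ¬ Fills H F ∧
      (Fills H S ∨ ∃ x ∈ H.V \ (F ∪ S), spDrawAux H n F (insert x S) true)

/-- SP has a drawing strategy for the Maker-Maker game on `H` (FP moves first). -/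
def SPDraw (H : FinHypergraph α) : Prop := spDrawAux H H.V.card ∅ ∅ true

section EnlargeEdge

open Finset

private lemma free_pair (H H' : FinHypergraph α) (z z' : α) (M B : Finset α)
    (hz : z ∉ H.V) (hz' : z' ∉ H.V) (hV : H'.V = insert z (insert z' H.V)) :
    H'.V \ (insert z M ∪ insert z' B) = H.V \ (M ∪ B) := by
  ext a
  simp only [hV, Finset.mem_sdiff, Finset.mem_union, Finset.mem_insert]
  constructor
  · rintro ⟨(rfl | rfl | ha), h2⟩
    · exact absurd (Or.inl (Or.inl rfl)) h2
    · exact absurd (Or.inr (Or.inl rfl)) h2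
    · exact ⟨ha, fun h => h2 (h.imp Or.inr Or.inr)⟩
  · rintro ⟨ha, h2⟩
    refine ⟨Or.inr (Or.inr ha), ?_⟩
    rintro ((rfl | hm) | (rfl | hb))
    exacts [hz ha, h2 (Or.inl hm), hz' ha, h2 (Or.inr hb)]

private lemma free_insert_left (V M B : Finset α) (u : α) :
    V \ (insert u M ∪ B) = (V \ (M ∪ B)).erase u := by
  ext a
  simp only [Finset.mem_sdiff, Finset.mem_union, Finset.mem_insert, Finset.mem_erase]
  tauto

private lemma free_insert_right (V M B : Finset α) (u : α) :
    V \ (M ∪ insert u B) = (V \ (M ∪ B)).erase u := by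
  ext a
  simp only [Finset.mem_sdiff, Finset.mem_union, Finset.mem_insert, Finset.mem_erase]
  tauto

private lemma fills_up {H H' : FinHypergraph α} {e0 : Finset α} (he0 : e0 ∈ H.E)
    {z : α} (hmem : insert z e0 ∈ H'.E) (hsubE : ∀ e ∈ H.E, e ≠ e0 → e ∈ H'.E)
    {M : Finset α} (h : Fills H M) : Fills H' (insert z M) := by
  obtain ⟨e, he, hsub⟩ := h
  by_cases hne : e = e0
  · subst hne
    exact ⟨insert z e, hmem, insert_subset_insert _ hsub⟩
  · exact ⟨e, hsubE e he hne, hsub.trans (subset_insert _ _)⟩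

private lemma fills_down {H H' : FinHypergraph α} {e0 : Finset α} (he0 : e0 ∈ H.E)
    {z z' : α} (hz : z ∉ H.V) (hzz : z' ≠ z)
    (hcls : ∀ e ∈ H'.E, e = insert z e0 ∨ e = insert z' e0 ∨ (e ∈ H.E ∧ e ≠ e0))
    {M : Finset α} (hz'M : z' ∉ M) (h : Fills H' (insert z M)) : Fills H M := by
  obtain ⟨e', he', hsub⟩ := h
  rcases hcls e' he' with rfl | rfl | ⟨heH, hne⟩
  · refine ⟨e0, he0, fun a ha => ?_⟩
    rcases mem_insert.1 (hsub (mem_insert_of_mem ha)) with rfl | h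
    · exact absurd (H.edge_subset e0 he0 ha) hz
    · exact h
  · rcases mem_insert.1 (hsub (mem_insert_self _ _)) with h | h
    · exact absurd h hzz
    · exact absurd h hz'M
  · refine ⟨e', heH, fun a ha => ?_⟩
    rcases mem_insert.1 (hsub ha) with rfl | h
    · exact absurd (H.edge_subset e' heH ha) hz
    · exact h

private lemma aux_pair (H H' : FinHypergraph α) (e0 : Finset α) (he0 : e0 ∈ H.E)
    (z z' : α) (hz : z ∉ H.V) (hz' : z' ∉ H.V) (hzz : z' ≠ z)
    (hV : H'.V = insert z (insert z' H.V))
    (hmem : insert z e0 ∈ H'.E)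
    (hcls : ∀ e ∈ H'.E, e = insert z e0 ∨ e = insert z' e0 ∨ (e ∈ H.E ∧ e ≠ e0))
    (hsubE : ∀ e ∈ H.E, e ≠ e0 → e ∈ H'.E) :
    ∀ n M B (b : Bool), z' ∉ M →
      (makerAux H' n (insert z M) (insert z' B) b ↔ makerAux H n M B b) := by
  intro n
  induction n with
  | zero =>
    intro M B b hz'M
    show Fills H' (insert z M) ↔ Fills H M
    exact ⟨fills_down he0 hz hzz hcls hz'M, fills_up he0 hmem hsubE⟩
  | succ n ih =>
    intro M B b hz'M
    have hfree := free_pair H H' z z' M B hz hz' hV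
    cases b with
    | true =>
      show (∃ v ∈ H'.V \ (insert z M ∪ insert z' B), _) ↔ (∃ v ∈ H.V \ (M ∪ B), _)
      rw [hfree]
      constructor
      · rintro ⟨v, hv, hw⟩
        have hvH : v ∈ H.V := (mem_sdiff.1 hv).1
        have hz'M' : z' ∉ insert v M := by
          simp only [mem_insert]
          rintro (rfl | h)
          exacts [hz' hvH, hz'M h]
        refine ⟨v, hv, (ih (insert v M) B false hz'M').1 ?_⟩
        rwa [Finset.insert_comm] at hw
      · rintro ⟨v, hv, hw⟩
        have hvH : v ∈ H.V := (mem_sdiff.1 hv).1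
        have hz'M' : z' ∉ insert v M := by
          simp only [mem_insert]
          rintro (rfl | h)
          exacts [hz' hvH, hz'M h]
        refine ⟨v, hv, ?_⟩
        rw [Finset.insert_comm]
        exact (ih (insert v M) B false hz'M').2 hw
    | false =>
      show (∀ v ∈ H'.V \ (insert z M ∪ insert z' B), _) ↔ (∀ v ∈ H.V \ (M ∪ B), _)
      rw [hfree]
      constructor
      · intro h v hv
        have := h v hv
        rw [Finset.insert_comm] at this
        exact (ih M (insert v B) true hz'M).1 this
      · intro h v hv
        rw [Finset.insert_comm]
        exact (ih M (insert v B) true hz'M).2 (h v hv)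

private lemma maker_up (H H' : FinHypergraph α) (e0 : Finset α) (he0 : e0 ∈ H.E)
    (x y : α) (hx : x ∉ H.V) (hy : y ∉ H.V) (hxy : x ≠ y)
    (hV : H'.V = insert x (insert y H.V))
    (hE : H'.E = insert (insert x e0) (insert (insert y e0) (H.E.erase e0))) :
    ∀ n M B (b : Bool), x ∉ M → x ∉ B → y ∉ M → y ∉ B →
      makerAux H n M B b → makerAux H' (n + 2) M B b := by
  have hmemx : insert x e0 ∈ H'.E := by rw [hE]; exact mem_insert_self _ _
  have hmemy : insert y e0 ∈ H'.E := by
    rw [hE]; exact mem_insert_of_mem (mem_insert_self _ _)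
  have hsubE : ∀ e ∈ H.E, e ≠ e0 → e ∈ H'.E := by
    intro e he hne
    rw [hE]
    exact mem_insert_of_mem (mem_insert_of_mem (mem_erase.2 ⟨hne, he⟩))
  have hclsx : ∀ e ∈ H'.E, e = insert x e0 ∨ e = insert y e0 ∨ (e ∈ H.E ∧ e ≠ e0) := by
    intro e he
    rw [hE] at he
    simp only [mem_insert, mem_erase] at he
    tauto
  have hclsy : ∀ e ∈ H'.E, e = insert y e0 ∨ e = insert x e0 ∨ (e ∈ H.E ∧ e ≠ e0) := by
    intro e he
    rcases hclsx e he with h | h | h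
    exacts [Or.inr (Or.inl h), Or.inl h, Or.inr (Or.inr h)]
  have hVy : H'.V = insert y (insert x H.V) := by rw [hV, Finset.insert_comm]
  have hxV' : x ∈ H'.V := by rw [hV]; exact mem_insert_self _ _
  have hyV' : y ∈ H'.V := by rw [hV]; exact mem_insert_of_mem (mem_insert_self _ _)
  have hHsub : H.V ⊆ H'.V := by
    rw [hV]; exact (subset_insert _ _).trans (subset_insert _ _) |>.trans (by rfl)
  intro n
  induction n with
  | zero =>
    intro M B b hxM hxB hyM hyB h
    have hfill : Fills H M := h
    cases b with
    | true =>
      refine ⟨x, mem_sdiff.2 ⟨hxV', by simp [hxM, hxB]⟩, ?_⟩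
      intro v hv
      exact fills_up he0 hmemx hsubE hfill
    | false =>
      intro v hv
      by_cases hvx : v = x
      · refine ⟨y, mem_sdiff.2 ⟨hyV', ?_⟩, fills_up he0 hmemy hsubE hfill⟩
        subst hvx
        simp only [mem_union, mem_insert]
        push_neg
        exact ⟨hyM, Ne.symm hxy, hyB⟩
      · refine ⟨x, mem_sdiff.2 ⟨hxV', ?_⟩, fills_up he0 hmemx hsubE hfill⟩
        simp only [mem_union, mem_insert]
        push_neg
        exact ⟨hxM, fun h => hvx h.symm, hxB⟩
  | succ n ih =>
    intro M B b hxM hxB hyM hyB h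
    cases b with
    | true =>
      obtain ⟨m, hm, hrec⟩ := h
      have hmH : m ∈ H.V := (mem_sdiff.1 hm).1
      have hmxy : m ≠ x ∧ m ≠ y := ⟨fun e => hx (e ▸ hmH), fun e => hy (e ▸ hmH)⟩
      refine ⟨m, mem_sdiff.2 ⟨hHsub hmH, (mem_sdiff.1 hm).2⟩, ?_⟩
      exact ih (insert m M) B false
        (by simp [hxM, Ne.symm hmxy.1]) hxB (by simp [hyM, Ne.symm hmxy.2]) hyB hrec
    | false =>
      intro v hv
      have hv2 := (mem_sdiff.1 hv).2
      by_cases hvx : v = x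
      · -- Breaker takes x; Maker answers y and plays the pair lemma
        rw [hvx]
        refine ⟨y, mem_sdiff.2 ⟨hyV', ?_⟩, ?_⟩
        · simp only [mem_union, mem_insert]
          push_neg
          exact ⟨hyM, Ne.symm hxy, hyB⟩
        · exact (aux_pair H H' e0 he0 y x hy hx hxy hVy hmemy hclsy hsubE
            (n + 1) M B false hxM).2 h
      by_cases hvy : v = y
      · -- Breaker takes y; Maker answers x
        rw [hvy]
        refine ⟨x, mem_sdiff.2 ⟨hxV', ?_⟩, ?_⟩
        · simp only [mem_union, mem_insert]
          push_neg
          exact ⟨hxM, hxy, hxB⟩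
        · exact (aux_pair H H' e0 he0 x y hx hy (Ne.symm hxy) hV hmemx hclsx hsubE
            (n + 1) M B false hyM).2 h
      · have hvH : v ∈ H.V := by
          have := (mem_sdiff.1 hv).1
          rw [hV] at this
          rcases mem_insert.1 this with h' | h'
          · exact absurd h' hvx
          rcases mem_insert.1 h' with h'' | h''
          · exact absurd h'' hvy
          · exact h''
        exact ih M (insert v B) true hxM (by simp [hxB, Ne.symm hvx]) hyM
          (by simp [hyB, Ne.symm hvy]) (h v (mem_sdiff.2 ⟨hvH, hv2⟩))

private lemma maker_down (H H' : FinHypergraph α) (e0 : Finset α) (he0 : e0 ∈ H.E)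
    (x y : α) (hx : x ∉ H.V) (hy : y ∉ H.V) (hxy : x ≠ y)
    (hV : H'.V = insert x (insert y H.V))
    (hE : H'.E = insert (insert x e0) (insert (insert y e0) (H.E.erase e0))) :
    ∀ n M B (b : Bool), x ∉ M → x ∉ B → y ∉ M → y ∉ B →
      (H.V \ (M ∪ B)).card = n →
      makerAux H' (n + 2) M B b → makerAux H n M B b := by
  have hmemx : insert x e0 ∈ H'.E := by rw [hE]; exact mem_insert_self _ _
  have hmemy : insert y e0 ∈ H'.E := by
    rw [hE]; exact mem_insert_of_mem (mem_insert_self _ _)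
  have hsubE : ∀ e ∈ H.E, e ≠ e0 → e ∈ H'.E := by
    intro e he hne
    rw [hE]
    exact mem_insert_of_mem (mem_insert_of_mem (mem_erase.2 ⟨hne, he⟩))
  have hclsx : ∀ e ∈ H'.E, e = insert x e0 ∨ e = insert y e0 ∨ (e ∈ H.E ∧ e ≠ e0) := by
    intro e he
    rw [hE] at he
    simp only [mem_insert, mem_erase] at he
    tauto
  have hclsy : ∀ e ∈ H'.E, e = insert y e0 ∨ e = insert x e0 ∨ (e ∈ H.E ∧ e ≠ e0) := by
    intro e he
    rcases hclsx e he with h | h | h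
    exacts [Or.inr (Or.inl h), Or.inl h, Or.inr (Or.inr h)]
  have hVy : H'.V = insert y (insert x H.V) := by rw [hV, Finset.insert_comm]
  have hxV' : x ∈ H'.V := by rw [hV]; exact mem_insert_self _ _
  have hyV' : y ∈ H'.V := by rw [hV]; exact mem_insert_of_mem (mem_insert_self _ _)
  intro n
  induction n with
  | zero =>
    intro M B b hxM hxB hyM hyB hcard h
    have hVMB : ∀ a ∈ H.V, a ∈ M ∪ B := by
      intro a ha
      by_contra hnot
      have : a ∈ H.V \ (M ∪ B) := mem_sdiff.2 ⟨ha, hnot⟩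
      rw [card_eq_zero.1 hcard] at this
      exact absurd this (notMem_empty a)
    cases b with
    | true =>
      obtain ⟨u, hu, h1⟩ := h
      have hu2 := (mem_sdiff.1 hu).2
      by_cases hux : u = x
      · rw [hux] at h1
        have h0 := h1 y (mem_sdiff.2 ⟨hyV', by
          simp only [mem_union, mem_insert]
          push_neg
          exact ⟨⟨Ne.symm hxy, hyM⟩, hyB⟩⟩)
        exact fills_down he0 hx (Ne.symm hxy) hclsx hyM h0
      by_cases huy : u = y
      · rw [huy] at h1
        have h0 := h1 x (mem_sdiff.2 ⟨hxV', by
          simp only [mem_union, mem_insert]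
          push_neg
          exact ⟨⟨hxy, hxM⟩, hxB⟩⟩)
        exact fills_down he0 hy hxy hclsy hxM h0
      · have huH : u ∈ H.V := by
          have := (mem_sdiff.1 hu).1
          rw [hV] at this
          rcases mem_insert.1 this with h' | h'
          · exact absurd h' hux
          rcases mem_insert.1 h' with h'' | h''
          · exact absurd h'' huy
          · exact h''
        exact absurd (hVMB u huH) hu2
    | false =>
      have h1 := h x (mem_sdiff.2 ⟨hxV', by simp [hxM, hxB]⟩)
      obtain ⟨u, hu, h0⟩ := h1
      have hu2 := (mem_sdiff.1 hu).2
      have huy : u = y := by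
        by_cases hux : u = x
        · exact absurd (by rw [hux]; simp : u ∈ M ∪ insert x B) hu2
        by_cases huy : u = y
        · exact huy
        · have huH : u ∈ H.V := by
            have := (mem_sdiff.1 hu).1
            rw [hV] at this
            rcases mem_insert.1 this with h' | h'
            · exact absurd h' hux
            rcases mem_insert.1 h' with h'' | h''
            · exact absurd h'' huy
            · exact h''
          exact absurd (mem_union.2 (Or.elim (mem_union.1 (hVMB u huH)) Or.inl
            (fun hb => Or.inr (mem_insert_of_mem hb)))) hu2
      rw [huy] at h0
      exact fills_down he0 hy hxy hclsy hxM h0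
  | succ n ih =>
    intro M B b hxM hxB hyM hyB hcard h
    cases b with
    | true =>
      obtain ⟨u, hu, h1⟩ := h
      have hu2 := (mem_sdiff.1 hu).2
      by_cases hux : u = x
      · -- Maker's H' strategy takes x; answer with imagined Breaker y
        rw [hux] at h1
        have h2 := h1 y (mem_sdiff.2 ⟨hyV', by
          simp only [mem_union, mem_insert]
          push_neg
          exact ⟨⟨Ne.symm hxy, hyM⟩, hyB⟩⟩)
        exact (aux_pair H H' e0 he0 x y hx hy (Ne.symm hxy) hV hmemx hclsx hsubE
          (n + 1) M B true hyM).1 h2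
      by_cases huy : u = y
      · rw [huy] at h1
        have h2 := h1 x (mem_sdiff.2 ⟨hxV', by
          simp only [mem_union, mem_insert]
          push_neg
          exact ⟨⟨hxy, hxM⟩, hxB⟩⟩)
        exact (aux_pair H H' e0 he0 y x hy hx hxy hVy hmemy hclsy hsubE
          (n + 1) M B true hxM).1 h2
      · have huH : u ∈ H.V := by
          have := (mem_sdiff.1 hu).1
          rw [hV] at this
          rcases mem_insert.1 this with h' | h'
          · exact absurd h' hux
          rcases mem_insert.1 h' with h'' | h''
          · exact absurd h'' huy
          · exact h''
        have huxy : u ≠ x ∧ u ≠ y := ⟨hux, huy⟩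
        have hufree : u ∈ H.V \ (M ∪ B) := mem_sdiff.2 ⟨huH, hu2⟩
        have hcard' : (H.V \ (insert u M ∪ B)).card = n := by
          rw [free_insert_left, card_erase_of_mem hufree, hcard]
          rfl
        exact ⟨u, hufree, ih (insert u M) B false
          (by simp [hxM, Ne.symm huxy.1]) hxB (by simp [hyM, Ne.symm huxy.2]) hyB hcard' h1⟩
    | false =>
      intro v hv
      have hvH : v ∈ H.V := (mem_sdiff.1 hv).1
      have hvxy : v ≠ x ∧ v ≠ y := ⟨fun e => hx (e ▸ hvH), fun e => hy (e ▸ hvH)⟩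
      have hv' : v ∈ H'.V \ (M ∪ B) := by
        rw [hV]
        exact mem_sdiff.2 ⟨mem_insert_of_mem (mem_insert_of_mem hvH), (mem_sdiff.1 hv).2⟩
      have hcard' : (H.V \ (M ∪ insert v B)).card = n := by
        rw [free_insert_right, card_erase_of_mem hv, hcard]
        rfl
      exact ih M (insert v B) true hxM (by simp [hxB, Ne.symm hvxy.1]) hyM
        (by simp [hyB, Ne.symm hvxy.2]) hcard' (h v hv')

end EnlargeEdge

/-- (Lemma 1 of the paper.) Let `e0 ∈ E(H)`, and let `H'` be obtained from
`H` by adding two new vertices `x` and `y` and replacing the edge `e0` by the two edges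
`e0 ∪ {x}` and `e0 ∪ {y}`.  Then Maker wins the Maker-Breaker game on `H` iff Maker wins
the Maker-Breaker game on `H'`. -/
theorem makerWin_enlarge_edge (H H' : FinHypergraph α) (e0 : Finset α) (he0 : e0 ∈ H.E)
    (x y : α) (hx : x ∉ H.V) (hy : y ∉ H.V) (hxy : x ≠ y)
    (hV : H'.V = insert x (insert y H.V))
    (hE : H'.E = insert (insert x e0) (insert (insert y e0) (H.E.erase e0))) :
    MakerWin H ↔ MakerWin H' := by
  have hcard : H'.V.card = H.V.card + 2 := by
    rw [hV, Finset.card_insert_of_notMem (by simp [hx, hxy]),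
      Finset.card_insert_of_notMem hy]
  constructor
  · intro h
    have := maker_up H H' e0 he0 x y hx hy hxy hV hE H.V.card ∅ ∅ true
      (Finset.notMem_empty x) (Finset.notMem_empty x)
      (Finset.notMem_empty y) (Finset.notMem_empty y) h
    rw [MakerWin, hcard]
    exact this
  · intro h
    exact maker_down H H' e0 he0 x y hx hy hxy hV hE H.V.card ∅ ∅ true
      (Finset.notMem_empty x) (Finset.notMem_empty x)
      (Finset.notMem_empty y) (Finset.notMem_empty y) (by simp)
      (by rw [MakerWin, hcard] at h; exact h)
end

section
/- Let H be a finite hypergraph and let x, y ∈ V(H) be distinct vertices such that every edge of H containing y also contains x, and such that {x, y} ∈ E(H). Let H' be the hypergraph with vertex set V(H) \ {x, y} and edge set { e \ {x} : e ∈ E(H), y ∉ e }. Then Maker has a winning strategy for the Maker-Breaker game on H if and only if Maker has a winning strategy for the Maker-Breaker game on H'. In other words, a first round in which Maker picks x and Breaker answers by picking y is optimal for both players. -/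
/-!
Formalization of finite positional games (Maker-Breaker and Maker-Maker) on hypergraphs.

A position of a game is recorded by the sets of vertices picked by each player so far,
together with a fuel parameter equal to the number of vertices still unpicked, and a
Boolean recording whose turn it is (`true` = the first player, i.e. Maker/FP, to move).
The predicates below express, by recursion on the number of remaining moves, that the
corresponding player has a winning (resp. drawing) strategy from the given position.
-/

variable {α : Type} [DecidableEq α]

lemma fills_mono {H : FinHypergraph α} {M M' : Finset α} (h : M ⊆ M') (hf : Fills H M) :
    Fills H M' := by
  obtain ⟨e, he, hs⟩ := hf
  exact ⟨e, he, hs.trans h⟩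

lemma sdiff_ins_l (V M B : Finset α) (z : α) :
    V \ (insert z M ∪ B) = (V \ (M ∪ B)).erase z := by
  ext v
  simp only [Finset.mem_sdiff, Finset.mem_union, Finset.mem_insert, Finset.mem_erase]
  tauto

lemma sdiff_ins_r (V M B : Finset α) (z : α) :
    V \ (M ∪ insert z B) = (V \ (M ∪ B)).erase z := by
  ext v
  simp only [Finset.mem_sdiff, Finset.mem_union, Finset.mem_insert, Finset.mem_erase]
  tauto

lemma fills_win (H : FinHypergraph α) :
    ∀ (n : ℕ) (M B : Finset α) (c : Bool),
      Fills H M → n ≤ (H.V \ (M ∪ B)).card → makerAux H n M B c := by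
  intro n
  induction n with
  | zero => intro M B c hF _; cases c <;> exact hF
  | succ n ih =>
    intro M B c hF hcard
    cases c with
    | true =>
      obtain ⟨z, hz⟩ : (H.V \ (M ∪ B)).Nonempty := Finset.card_pos.mp (by omega)
      refine ⟨z, hz, ih _ _ _ (fills_mono (Finset.subset_insert _ _) hF) ?_⟩
      rw [sdiff_ins_l, Finset.card_erase_of_mem hz]
      omega
    | false =>
      intro z hz
      refine ih _ _ _ hF ?_
      rw [sdiff_ins_r, Finset.card_erase_of_mem hz]
      omega

lemma maker_transfer (H1 H2 : FinHypergraph α) :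
    ∀ (n : ℕ) (M1 B1 M2 B2 : Finset α) (c : Bool),
      H1.V \ (M1 ∪ B1) = H2.V \ (M2 ∪ B2) →
      Disjoint M1 B1 →
      (∀ e ∈ H1.E, (∀ v ∈ B1, v ∉ e) →
        ∃ e' ∈ H2.E, (∀ v ∈ B2, v ∉ e') ∧ e' \ M2 ⊆ e \ M1) →
      makerAux H1 n M1 B1 c → makerAux H2 n M2 B2 c := by
  intro n
  induction n with
  | zero =>
    intro M1 B1 M2 B2 c hfree hdisj hres h
    have hF : Fills H1 M1 := by cases c <;> exact h
    obtain ⟨e, he, hsub⟩ := hF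
    obtain ⟨e', he', hB2, hsub'⟩ :=
      hres e he (fun v hv hve => Finset.disjoint_left.mp hdisj (hsub hve) hv)
    have : e' ⊆ M2 := by
      intro v hv
      by_contra hvM
      have : v ∈ e \ M1 := hsub' (Finset.mem_sdiff.mpr ⟨hv, hvM⟩)
      rw [Finset.mem_sdiff] at this
      exact this.2 (hsub this.1)
    have hF2 : Fills H2 M2 := ⟨e', he', this⟩
    cases c <;> exact hF2
  | succ n ih =>
    intro M1 B1 M2 B2 c hfree hdisj hres h
    cases c with
    | true =>
      obtain ⟨z, hz, h'⟩ := h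
      have hz2 : z ∈ H2.V \ (M2 ∪ B2) := hfree ▸ hz
      have hzm : z ∉ M1 ∧ z ∉ B1 := by
        rw [Finset.mem_sdiff, Finset.mem_union] at hz; tauto
      have hzm2 : z ∉ M2 := by
        rw [Finset.mem_sdiff, Finset.mem_union] at hz2; tauto
      refine ⟨z, hz2, ih _ _ _ _ _ ?_ ?_ ?_ h'⟩
      · rw [sdiff_ins_l, sdiff_ins_l, hfree]
      · exact Finset.disjoint_insert_left.mpr ⟨hzm.2, hdisj⟩
      · intro e he hB
        obtain ⟨e', he', hB2, hsub'⟩ := hres e he hB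
        refine ⟨e', he', hB2, ?_⟩
        intro v hv
        rw [Finset.mem_sdiff, Finset.mem_insert] at hv ⊢
        have : v ∈ e \ M1 := hsub' (Finset.mem_sdiff.mpr ⟨hv.1, fun h => hv.2 (Or.inr h)⟩)
        rw [Finset.mem_sdiff] at this
        exact ⟨this.1, fun h => h.elim (fun h => hv.2 (Or.inl h)) this.2⟩
    | false =>
      intro z hz2
      have hz : z ∈ H1.V \ (M1 ∪ B1) := hfree ▸ hz2
      have hzm : z ∉ M1 ∧ z ∉ B1 := by
        rw [Finset.mem_sdiff, Finset.mem_union] at hz; tauto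
      have hzm2 : z ∉ M2 := by
        rw [Finset.mem_sdiff, Finset.mem_union] at hz2; tauto
      refine ih _ _ _ _ _ ?_ ?_ ?_ (h z hz)
      · rw [sdiff_ins_r, sdiff_ins_r, hfree]
      · exact Finset.disjoint_insert_right.mpr ⟨hzm.1, hdisj⟩
      · intro e he hB
        obtain ⟨e', he', hB2, hsub'⟩ := hres e he (fun v hv => hB v (Finset.mem_insert_of_mem hv))
        refine ⟨e', he', ?_, hsub'⟩
        intro v hv
        rw [Finset.mem_insert] at hv
        rcases hv with rfl | hv
        · intro hve
          have : v ∈ e \ M1 := hsub' (Finset.mem_sdiff.mpr ⟨hve, hzm2⟩)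
          rw [Finset.mem_sdiff] at this
          exact hB v (Finset.mem_insert_self _ _) this.1
        · exact hB2 v hv

def FinHypergraph.update (H : FinHypergraph α) (M B : Finset α) : FinHypergraph α where
  V := H.V \ (M ∪ B)
  E := (H.E.filter fun e => ∀ v ∈ B, v ∉ e).image fun e => e \ M
  edge_subset := by
    intro e he
    simp only [Finset.mem_image, Finset.mem_filter] at he
    obtain ⟨f, ⟨hf, hB⟩, rfl⟩ := he
    intro v hv
    rw [Finset.mem_sdiff] at hv
    rw [Finset.mem_sdiff, Finset.mem_union]
    exact ⟨H.edge_subset f hf hv.1, fun h => h.elim hv.2 (fun hB' => hB v hB' hv.1)⟩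

lemma FinHypergraph.ext' {H1 H2 : FinHypergraph α} (hV : H1.V = H2.V) (hE : H1.E = H2.E) :
    H1 = H2 := by
  cases H1; cases H2; simp_all

lemma mem_update_E {H : FinHypergraph α} {M B : Finset α} {e : Finset α} :
    e ∈ (H.update M B).E ↔ ∃ f, f ∈ H.E ∧ (∀ v ∈ B, v ∉ f) ∧ f \ M = e := by
  simp [FinHypergraph.update, Finset.mem_image, Finset.mem_filter, and_assoc]

lemma update_pair_V (H : FinHypergraph α) (x y : α) :
    (H.update {x} {y}).V = H.V \ {x, y} := by
  show H.V \ ({x} ∪ {y}) = H.V \ {x, y}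
  rw [← Finset.insert_eq]

lemma update_pair_E (H : FinHypergraph α) (x y : α) :
    (H.update {x} {y}).E = (H.E.filter (fun e => y ∉ e)).image (fun e => e.erase x) := by
  ext e
  rw [mem_update_E]
  simp only [Finset.mem_image, Finset.mem_filter, Finset.mem_singleton, Finset.erase_eq]
  constructor
  · rintro ⟨f, hf, hy, rfl⟩
    exact ⟨f, ⟨hf, hy y rfl⟩, rfl⟩
  · rintro ⟨f, ⟨hf, hy⟩, rfl⟩
    exact ⟨f, hf, fun v hv => hv ▸ hy, rfl⟩

lemma maker_root (H : FinHypergraph α) (M B : Finset α) (hd : Disjoint M B)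
    (n : ℕ) (hn : n = (H.V \ (M ∪ B)).card) :
    makerAux H n M B true ↔ MakerWin (H.update M B) := by
  have hV : (H.update M B).V = H.V \ (M ∪ B) := rfl
  unfold MakerWin
  rw [hV, ← hn]
  constructor
  · refine maker_transfer H (H.update M B) n M B ∅ ∅ true ?_ hd ?_
    · rw [hV]; simp
    · intro e he hB
      refine ⟨e \ M, mem_update_E.mpr ⟨e, he, hB, rfl⟩, by simp, by simp⟩
  · refine maker_transfer (H.update M B) H n ∅ ∅ M B true ?_ (by simp) ?_
    · rw [hV]; simp
    · intro e' he' _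
      obtain ⟨f, hf, hB, rfl⟩ := mem_update_E.mp he'
      exact ⟨f, hf, hB, by simp⟩

lemma update_comm (H : FinHypergraph α) (A B C D : Finset α)
    (hDA : Disjoint D A) (hBC : Disjoint B C) :
    (H.update A B).update C D = (H.update C D).update A B := by
  apply FinHypergraph.ext'
  · show (H.V \ (A ∪ B)) \ (C ∪ D) = (H.V \ (C ∪ D)) \ (A ∪ B)
    rw [sdiff_sdiff_comm]
  · ext e
    rw [mem_update_E, mem_update_E]
    constructor
    · rintro ⟨f, hf1, hD, rfl⟩
      obtain ⟨g, hg, hB, rfl⟩ := mem_update_E.mp hf1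
      refine ⟨g \ C, mem_update_E.mpr ⟨g, hg, ?_, rfl⟩, ?_, by rw [sdiff_sdiff_comm]⟩
      · intro v hv hvg
        exact hD v hv (Finset.mem_sdiff.mpr ⟨hvg, Finset.disjoint_left.mp hDA hv⟩)
      · intro v hv hvg
        rw [Finset.mem_sdiff] at hvg
        exact hB v hv hvg.1
    · rintro ⟨f, hf1, hB, rfl⟩
      obtain ⟨g, hg, hD, rfl⟩ := mem_update_E.mp hf1
      refine ⟨g \ A, mem_update_E.mpr ⟨g, hg, ?_, rfl⟩, ?_, by rw [sdiff_sdiff_comm]⟩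
      · intro v hv hvg
        exact hB v hv (Finset.mem_sdiff.mpr ⟨hvg, Finset.disjoint_left.mp hBC hv⟩)
      · intro v hv hvg
        rw [Finset.mem_sdiff] at hvg
        exact hD v hv hvg.1

lemma greedy_aux : ∀ (n : ℕ) (H H' : FinHypergraph α) (x y : α),
    x ∈ H.V → y ∈ H.V → x ≠ y →
    (∀ e ∈ H.E, y ∈ e → x ∈ e) →
    ({x, y} : Finset α) ∈ H.E →
    H'.V = H.V \ {x, y} →
    H'.E = (H.E.filter (fun e => y ∉ e)).image (fun e => e.erase x) →
    H.V.card = n → (MakerWin H ↔ MakerWin H') := by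
  intro n
  induction n using Nat.strong_induction_on with
  | _ n ih =>
  intro H H' x y hx hy hxy hcover hedge hV hE hn
  have hxyV : ({x, y} : Finset α) ⊆ H.V := by
    intro v hv
    rcases Finset.mem_insert.mp hv with rfl | hv
    · exact hx
    · rw [Finset.mem_singleton] at hv; subst hv; exact hy
  have hcard2 : ({x, y} : Finset α).card = 2 := by
    rw [Finset.card_insert_of_notMem (by simp [hxy]), Finset.card_singleton]
  obtain ⟨k, rfl⟩ : ∃ k, n = k + 2 := by
    have := Finset.card_le_card hxyV
    exact ⟨n - 2, by omega⟩
  have hV'card : H'.V.card = k := by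
    rw [hV, Finset.card_sdiff_of_subset hxyV, hcard2, hn]
    omega
  have hH' : H' = H.update {x} {y} :=
    FinHypergraph.ext' (by rw [hV, update_pair_V]) (by rw [hE, update_pair_E])
  constructor
  · -- Maker wins H → Maker wins H'
    intro hM
    unfold MakerWin at hM
    rw [hn] at hM
    simp only [makerAux] at hM
    obtain ⟨a, ha, hstrat⟩ := hM
    have haV : a ∈ H.V := (Finset.mem_sdiff.mp ha).1
    unfold MakerWin
    rw [hV'card]
    by_cases hax : a = x
    · subst hax
      have h1 := hstrat y (by
        rw [Finset.mem_sdiff]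
        refine ⟨hy, ?_⟩
        simp only [Finset.union_empty, Finset.mem_insert, Finset.notMem_empty, or_false]
        exact Ne.symm hxy)
      refine maker_transfer H H' k (insert a ∅) (insert y ∅) ∅ ∅ true ?_ ?_ ?_ h1
      · rw [hV]; ext v; simp only [Finset.mem_sdiff, Finset.mem_union, Finset.mem_insert,
          Finset.notMem_empty, Finset.union_empty, Finset.mem_singleton]; tauto
      · simp [hxy, Ne.symm hxy]
      · intro e he hB
        have hye : y ∉ e := hB y (Finset.mem_insert_self _ _)
        refine ⟨e.erase a, ?_, by simp, ?_⟩
        · rw [hE]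
          exact Finset.mem_image.mpr ⟨e, Finset.mem_filter.mpr ⟨he, hye⟩, rfl⟩
        · intro v hv
          simp only [Finset.mem_sdiff, Finset.mem_erase, Finset.notMem_empty,
            Finset.mem_insert, not_false_iff, and_true, Finset.sdiff_empty] at hv ⊢
          tauto
    by_cases hay : a = y
    · subst hay
      have h1 := hstrat x (by
        rw [Finset.mem_sdiff]
        refine ⟨hx, ?_⟩
        simp only [Finset.union_empty, Finset.mem_insert, Finset.notMem_empty, or_false]
        exact hxy)
      refine maker_transfer H H' k (insert a ∅) (insert x ∅) ∅ ∅ true ?_ ?_ ?_ h1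
      · rw [hV]; ext v; simp only [Finset.mem_sdiff, Finset.mem_union, Finset.mem_insert,
          Finset.notMem_empty, Finset.union_empty, Finset.mem_singleton]; tauto
      · simp [hxy, Ne.symm hxy]
      · intro e he hB
        have hxe : x ∉ e := hB x (Finset.mem_insert_self _ _)
        have hae : a ∉ e := fun h => hxe (hcover e he h)
        refine ⟨e.erase x, ?_, by simp, ?_⟩
        · rw [hE]
          exact Finset.mem_image.mpr ⟨e, Finset.mem_filter.mpr ⟨he, hae⟩, rfl⟩
        · intro v hv
          simp only [Finset.mem_sdiff, Finset.mem_erase, Finset.notMem_empty,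
            Finset.mem_insert, not_false_iff, and_true, Finset.sdiff_empty] at hv ⊢
          refine ⟨hv.2, ?_⟩
          rintro (rfl | h)
          · exact hae hv.2
          · exact h
    · -- a ∉ {x, y}
      have haV' : a ∈ H'.V := by
        rw [hV, Finset.mem_sdiff]
        exact ⟨haV, by simp [hax, hay]⟩
      obtain ⟨j, rfl⟩ : ∃ j, k = j + 1 := by
        have := Finset.card_pos.mpr ⟨a, haV'⟩
        rw [hV'card] at this
        exact ⟨k - 1, by omega⟩
      simp only [makerAux]
      refine ⟨a, by simp [haV'], ?_⟩
      match j with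
      | 0 =>
        show Fills H' (insert a ∅)
        have hVa : H'.V = {a} := by
          obtain ⟨b, hb⟩ := Finset.card_eq_one.mp hV'card
          rw [hb] at haV' ⊢
          rw [Finset.mem_singleton.mp haV']
        have h1 := hstrat x (by
          rw [Finset.mem_sdiff]
          refine ⟨hx, ?_⟩
          simp only [Finset.union_empty, Finset.mem_insert, Finset.notMem_empty, or_false]
          exact fun h => hax h.symm)
        simp only [makerAux] at h1
        obtain ⟨z, hz, hf⟩ := h1
        rw [Finset.mem_sdiff, Finset.mem_union] at hz
        have hza : z ≠ a := fun h => hz.2 (by simp [h])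
        have hzx : z ≠ x := fun h => hz.2 (by simp [h])
        have hzy : z = y := by
          by_contra hzy
          have hzV' : z ∈ H'.V := by
            rw [hV, Finset.mem_sdiff]
            exact ⟨hz.1, by simp [hzx, hzy]⟩
          rw [hVa, Finset.mem_singleton] at hzV'
          exact hza hzV'
        subst hzy
        obtain ⟨e, he, hs⟩ := hf
        have hxe : x ∉ e := by
          intro h
          have := hs h
          simp only [Finset.mem_insert, Finset.notMem_empty, or_false] at this
          rcases this with h' | h'
          · exact hxy h'
          · exact hax h'.symm
        have hye : z ∉ e := fun h => hxe (hcover e he h)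
        refine ⟨e, ?_, ?_⟩
        · rw [hE]
          exact Finset.mem_image.mpr ⟨e, Finset.mem_filter.mpr ⟨he, hye⟩,
            Finset.erase_eq_self.mpr hxe⟩
        · intro v hv
          have := hs hv
          simp only [Finset.mem_insert, Finset.notMem_empty, or_false] at this ⊢
          rcases this with h' | h'
          · exact absurd (h' ▸ hv) hye
          · exact h'
      | (i+1) =>
        simp only [makerAux]
        intro b' hb'
        rw [Finset.mem_sdiff] at hb'
        have hb'V' : b' ∈ H'.V := hb'.1
        have hb'a : b' ≠ a := fun h => hb'.2 (by simp [h])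
        have hb'V : b' ∈ H.V := by rw [hV] at hb'V'; exact (Finset.mem_sdiff.mp hb'V').1
        have hb'xy : b' ≠ x ∧ b' ≠ y := by
          rw [hV, Finset.mem_sdiff] at hb'V'
          constructor <;> intro h <;> exact hb'V'.2 (by simp [h])
        have hxa : x ≠ a := fun h => hax h.symm
        have hya : y ≠ a := fun h => hay h.symm
        have hdisj1 : Disjoint (insert a (∅ : Finset α)) (insert b' ∅) := by
          simp only [Finset.disjoint_insert_left, Finset.disjoint_insert_right,
            Finset.mem_insert, Finset.notMem_empty, or_false, Finset.disjoint_empty_left,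
            and_true, Finset.disjoint_empty_right]
          exact hb'a
        have hU : ∀ (u v : α), insert u (∅ : Finset α) ∪ insert v ∅ = {u, v} := by
          intro u v; ext w; simp
        have hsub1 : ({a, b'} : Finset α) ⊆ H.V := by
          intro v hv
          rcases Finset.mem_insert.mp hv with rfl | hv
          · exact haV
          · rw [Finset.mem_singleton] at hv; subst hv; exact hb'V
        have hcardH : (i + 1 + 1 : ℕ) = (H.V \ (insert a ∅ ∪ insert b' ∅)).card := by
          rw [hU, Finset.card_sdiff_of_subset hsub1, Finset.card_pair (Ne.symm hb'a), hn]
          omega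
        have h1 := hstrat b' (by
          rw [Finset.mem_sdiff]
          refine ⟨hb'V, ?_⟩
          simp only [Finset.union_empty, Finset.mem_insert, Finset.notMem_empty, or_false]
          exact hb'a)
        rw [maker_root H (insert a ∅) (insert b' ∅) hdisj1 (i+1+1) hcardH] at h1
        have hx1 : x ∈ (H.update (insert a ∅) (insert b' ∅)).V := by
          show x ∈ H.V \ _
          rw [Finset.mem_sdiff, hU]
          exact ⟨hx, by simp [hxa, Ne.symm hb'xy.1]⟩
        have hy1 : y ∈ (H.update (insert a ∅) (insert b' ∅)).V := by
          show y ∈ H.V \ _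
          rw [Finset.mem_sdiff, hU]
          exact ⟨hy, by simp [hya, Ne.symm hb'xy.2]⟩
        have hcover1 : ∀ e ∈ (H.update (insert a ∅) (insert b' ∅)).E, y ∈ e → x ∈ e := by
          intro e he hye
          obtain ⟨g, hg, hBg, rfl⟩ := mem_update_E.mp he
          rw [Finset.mem_sdiff] at hye ⊢
          refine ⟨hcover g hg hye.1, ?_⟩
          simp only [Finset.mem_insert, Finset.notMem_empty, or_false]
          exact hxa
        have hedge1 : ({x, y} : Finset α) ∈ (H.update (insert a ∅) (insert b' ∅)).E := by
          refine mem_update_E.mpr ⟨{x, y}, hedge, ?_, ?_⟩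
          · intro v hv
            simp only [Finset.mem_insert, Finset.notMem_empty, or_false] at hv
            subst hv
            simp only [Finset.mem_insert, Finset.mem_singleton]
            rintro (h | h)
            · exact hb'xy.1 h
            · exact hb'xy.2 h
          · rw [Finset.sdiff_eq_self_iff_disjoint]
            simp only [Finset.disjoint_insert_right, Finset.disjoint_empty_right, and_true,
              Finset.mem_insert, Finset.mem_singleton]
            rintro (h | h)
            · exact hax h
            · exact hay h
        have hcard1 : (H.update (insert a ∅) (insert b' ∅)).V.card = i + 1 + 1 := by
          exact hcardH.symm
        have hiff := ih (i+1+1) (by omega) (H.update (insert a ∅) (insert b' ∅))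
          ((H.update (insert a ∅) (insert b' ∅)).update {x} {y}) x y hx1 hy1 hxy hcover1 hedge1
          (update_pair_V _ x y) (update_pair_E _ x y) hcard1
        have h2 := hiff.mp h1
        have hcomm : (H.update (insert a ∅) (insert b' ∅)).update {x} {y}
            = H'.update (insert a ∅) (insert b' ∅) := by
          rw [hH']
          exact update_comm H (insert a ∅) (insert b' ∅) {x} {y}
            (by
              simp only [Finset.disjoint_insert_right, Finset.disjoint_empty_right, and_true,
                Finset.disjoint_singleton_left, Finset.mem_insert, Finset.notMem_empty, or_false,
                Finset.mem_singleton]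
              exact hay)
            (by
              simp only [Finset.disjoint_insert_left, Finset.disjoint_empty_left, and_true,
                Finset.mem_singleton]
              exact hb'xy.1)
        rw [hcomm] at h2
        have hsub2 : ({a, b'} : Finset α) ⊆ H'.V := by
          intro v hv
          rcases Finset.mem_insert.mp hv with rfl | hv
          · exact haV'
          · rw [Finset.mem_singleton] at hv; subst hv; exact hb'V'
        have hcard' : (i : ℕ) = (H'.V \ (insert a ∅ ∪ insert b' ∅)).card := by
          rw [hU, Finset.card_sdiff_of_subset hsub2, Finset.card_pair (Ne.symm hb'a), hV'card]
          omega
        rw [maker_root H' (insert a ∅) (insert b' ∅) hdisj1 i hcard']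
        exact h2
  · intro hM'
    unfold MakerWin at hM' ⊢
    rw [hV'card] at hM'
    rw [hn]
    simp only [makerAux]
    refine ⟨x, by simp [hx], ?_⟩
    intro b hb
    rw [Finset.mem_sdiff] at hb
    have hbV : b ∈ H.V := hb.1
    have hbx : b ≠ x := by
      intro h; exact hb.2 (by simp [h])
    by_cases hby : b = y
    · subst hby
      refine maker_transfer H' H k ∅ ∅ (insert x ∅) (insert b ∅) true ?_ (by simp) ?_ hM'
      · rw [hV]; ext v
        simp only [Finset.mem_sdiff, Finset.mem_union, Finset.mem_insert, Finset.mem_singleton,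
          Finset.notMem_empty, Finset.union_empty, Finset.empty_union, or_false]
        tauto
      · intro e' he' _
        rw [hE] at he'
        obtain ⟨f, hf, rfl⟩ := Finset.mem_image.mp he'
        rw [Finset.mem_filter] at hf
        refine ⟨f, hf.1, ?_, ?_⟩
        · intro v hv
          simp only [Finset.mem_insert, Finset.notMem_empty, or_false] at hv
          subst hv; exact hf.2
        · intro v hv
          simp only [Finset.mem_sdiff, Finset.mem_insert, Finset.notMem_empty, or_false,
            Finset.sdiff_empty, Finset.mem_erase] at hv ⊢
          exact ⟨hv.2, hv.1⟩
    · have hyfree : y ∈ H.V \ (insert x ∅ ∪ insert b ∅) := by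
        rw [Finset.mem_sdiff]
        refine ⟨hy, ?_⟩
        simp only [Finset.mem_union, Finset.mem_insert, Finset.notMem_empty, or_false]
        rintro (h | h)
        · exact hxy h.symm
        · exact hby h.symm
      have hsub3 : ({y, x, b} : Finset α) ⊆ H.V := by
        intro v hv
        simp only [Finset.mem_insert, Finset.mem_singleton] at hv
        rcases hv with rfl | rfl | rfl
        · exact hy
        · exact hx
        · exact hbV
      have hsubxb : ({x, b} : Finset α) ⊆ H.V := by
        intro v hv
        simp only [Finset.mem_insert, Finset.mem_singleton] at hv
        rcases hv with rfl | rfl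
        · exact hx
        · exact hbV
      have hcardfree : (H.V \ (insert x ∅ ∪ insert b ∅)).card = k := by
        have hU : insert x (∅ : Finset α) ∪ insert b ∅ = {x, b} := by ext w; simp
        rw [hU, Finset.card_sdiff_of_subset hsubxb, Finset.card_pair (Ne.symm hbx), hn]
        omega
      obtain ⟨i, rfl⟩ : ∃ i, k = i + 1 := by
        have := Finset.card_pos.mpr ⟨y, hyfree⟩
        rw [hcardfree] at this
        exact ⟨k - 1, by omega⟩
      simp only [makerAux]
      refine ⟨y, hyfree, ?_⟩
      refine fills_win H i _ _ false ⟨{x, y}, hedge, ?_⟩ ?_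
      · intro v hv
        simp only [Finset.mem_insert, Finset.mem_singleton] at hv
        rcases hv with rfl | rfl
        · simp
        · simp
      · have hU3 : insert y (insert x ∅) ∪ insert b ∅ = ({y, x, b} : Finset α) := by
          ext w; simp
        rw [hU3, Finset.card_sdiff_of_subset hsub3]
        have hc3 : ({y, x, b} : Finset α).card = 3 := by
          rw [Finset.card_insert_of_notMem (by
            simp only [Finset.mem_insert, Finset.mem_singleton]
            rintro (h | h)
            · exact hxy h.symm
            · exact hby h.symm),
            Finset.card_insert_of_notMem (by
              simp only [Finset.mem_singleton]
              exact fun h => hbx h.symm),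
            Finset.card_singleton]
        rw [hc3, hn]
        omega

/-- (Greedy move for Maker-Breaker.) Let `x ≠ y` be vertices of `H` such
that every edge containing `y` also contains `x`, and `{x, y} ∈ E(H)`.  Let `H'` be the
updated hypergraph after Maker picks `x` and Breaker picks `y`: its vertex set is
`V(H) \ {x, y}` and its edges are the sets `e \ {x}` for `e ∈ E(H)` with `y ∉ e`.
Then Maker wins the Maker-Breaker game on `H` iff Maker wins it on `H'`; in other words,
this first round of play is optimal for both players. -/
theorem makerWin_greedy_move (H H' : FinHypergraph α) (x y : α)
    (hx : x ∈ H.V) (hy : y ∈ H.V) (hxy : x ≠ y)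
    (hcover : ∀ e ∈ H.E, y ∈ e → x ∈ e)
    (hedge : ({x, y} : Finset α) ∈ H.E)
    (hV : H'.V = H.V \ {x, y})
    (hE : H'.E = (H.E.filter (fun e => y ∉ e)).image (fun e => e.erase x)) :
    MakerWin H ↔ MakerWin H' := by
  exact greedy_aux H.V.card H H' x y hx hy hxy hcover hedge hV hE rfl
end

section
/- Let H be a finite hypergraph and let G = (F, S) be an intermediate position of the Maker-Maker game on H with FP to move, i.e., F, S ⊆ V(H) are disjoint with |F| = |S|, no edge of H is contained in F, and no edge of H is contained in S. Let x, y ∈ V(H) \ (F ∪ S) be distinct. Suppose that every updated edge of G (red or blue) containing y also contains x, and that in the position (F ∪ {x}, S) with SP to move, every SP move other than picking y leads to a position from which FP has a winning strategy. Let G' = (F ∪ {x}, S ∪ {y}). Then the position G and the position G' have the same outcome under optimal play: FP has a winning strategy from G if and only if FP has a winning strategy from G', and SP has a winning strategy from G if and only if SP has a winning strategy from G'. -/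
/-!
Formalization of finite positional games (Maker-Breaker and Maker-Maker) on hypergraphs.

A position of a game is recorded by the sets of vertices picked by each player so far,
together with a fuel parameter equal to the number of vertices still unpicked, and a
Boolean recording whose turn it is (`true` = the first player, i.e. Maker/FP, to move).
The predicates below express, by recursion on the number of remaining moves, that the
corresponding player has a winning (resp. drawing) strategy from the given position.
-/

variable {α : Type} [DecidableEq α]

theorem gm_fills_mono (H : FinHypergraph α) {A B : Finset α} (h : A ⊆ B) :
    Fills H A → Fills H B := fun ⟨e, he, hs⟩ => ⟨e, he, hs.trans h⟩

theorem gm_useless (H : FinHypergraph α) {U W : Finset α} {x y : α}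
    (hdom : ∀ e ∈ H.E, Disjoint e W → y ∈ e \ U → x ∈ e \ U)
    (hyU : y ∉ U) {T : Finset α} (hTW : Disjoint (insert y T) W)
    (hxT : x ∉ insert y T) :
    Fills H (insert y T) → Fills H T := by
  rintro ⟨e, he, hsub⟩
  by_cases hye : y ∈ e
  · have hd : Disjoint e W := Finset.disjoint_of_subset_left hsub hTW
    have hx' := hdom e he hd (Finset.mem_sdiff.mpr ⟨hye, hyU⟩)
    exact absurd (hsub (Finset.mem_sdiff.mp hx').1) hxT
  · refine ⟨e, he, fun a ha => ?_⟩
    rcases Finset.mem_insert.mp (hsub ha) with h | h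
    · exact absurd (h ▸ ha) hye
    · exact h

theorem gm_fp_true (H : FinHypergraph α) {F S : Finset α} (n : ℕ)
    (h1 : ¬ Fills H S) (h2 : Fills H F) : fpAux H n F S true := by
  cases n with
  | zero => exact ⟨h1, h2⟩
  | succ n => exact ⟨h1, Or.inl h2⟩

theorem gm_fp_false (H : FinHypergraph α) {F S : Finset α} (n : ℕ)
    (h2 : Fills H F) : fpAux H n F S false := by
  cases n with
  | zero => exact h2
  | succ n => exact Or.inl h2

theorem gm_noboth (H : FinHypergraph α) : ∀ (n : ℕ) (F S : Finset α) (b : Bool),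
    fpAux H n F S b → spAux H n F S b → False := by
  intro n
  induction n with
  | zero =>
    intro F S b hf hs
    cases b
    · exact hs.1 hf
    · exact hf.1 hs
  | succ n ih =>
    intro F S b hf hs
    cases b
    · rcases hf with hf | ⟨hnS, hall⟩
      · exact hs.1 hf
      · rcases hs.2 with h | ⟨z, hz, hsz⟩
        · exact hnS h
        · exact ih _ _ _ (hall z hz) hsz
    · rcases hs with hs | ⟨hnF, hall⟩
      · exact hf.1 hs
      · rcases hf.2 with h | ⟨z, hz, hfz⟩
        · exact hnF h
        · exact ih _ _ _ hfz (hall z hz)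

theorem gm_sdiff_insert_left (V A B : Finset α) (u : α) :
    V \ (insert u A ∪ B) = (V \ (A ∪ B)).erase u := by
  ext a
  simp only [Finset.mem_sdiff, Finset.mem_union, Finset.mem_insert, Finset.mem_erase, not_or]
  tauto

theorem gm_sdiff_insert_right (V A B : Finset α) (u : α) :
    V \ (A ∪ insert u B) = (V \ (A ∪ B)).erase u := by
  ext a
  simp only [Finset.mem_sdiff, Finset.mem_union, Finset.mem_insert, Finset.mem_erase, not_or]
  tauto

theorem gm_union_swap (A B : Finset α) (x y : α) :
    insert y A ∪ insert x B = insert x A ∪ insert y B := by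
  ext a
  simp only [Finset.mem_union, Finset.mem_insert]
  tauto

theorem gm_fpSwap (H : FinHypergraph α) {F S : Finset α} {x y : α}
    (hred : ∀ e ∈ H.E, Disjoint e S → y ∈ e \ F → x ∈ e \ F)
    (hblue : ∀ e ∈ H.E, Disjoint e F → y ∈ e \ S → x ∈ e \ S)
    (hxy : x ≠ y) (hyF : y ∉ F) (hyS : y ∉ S) :
    ∀ (n : ℕ) (A B : Finset α) (b : Bool), F ⊆ A → S ⊆ B →
      Disjoint A S → Disjoint B F → x ∉ A → x ∉ B → y ∉ A → y ∉ B →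
      fpAux H n (insert y A) (insert x B) b → fpAux H n (insert x A) (insert y B) b := by
  intro n
  induction n with
  | zero =>
    intro A B b hFA hSB hAS hBF hxA hxB hyA hyB hfp
    have convA : Fills H (insert y A) → Fills H (insert x A) := fun h =>
      gm_fills_mono H (Finset.subset_insert x A)
        (gm_useless H hred hyF (Finset.disjoint_insert_left.mpr ⟨hyS, hAS⟩)
          (by simp [Finset.mem_insert, hxy, hxA]) h)
    have convB : Fills H (insert y B) → Fills H (insert x B) := fun h =>
      gm_fills_mono H (Finset.subset_insert x B)
        (gm_useless H hblue hyS (Finset.disjoint_insert_left.mpr ⟨hyF, hBF⟩)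
          (by simp [Finset.mem_insert, hxy, hxB]) h)
    cases b
    · exact convA hfp
    · exact ⟨fun h => hfp.1 (convB h), convA hfp.2⟩
  | succ n ih =>
    intro A B b hFA hSB hAS hBF hxA hxB hyA hyB hfp
    have convA : Fills H (insert y A) → Fills H (insert x A) := fun h =>
      gm_fills_mono H (Finset.subset_insert x A)
        (gm_useless H hred hyF (Finset.disjoint_insert_left.mpr ⟨hyS, hAS⟩)
          (by simp [Finset.mem_insert, hxy, hxA]) h)
    have convB : Fills H (insert y B) → Fills H (insert x B) := fun h =>
      gm_fills_mono H (Finset.subset_insert x B)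
        (gm_useless H hblue hyS (Finset.disjoint_insert_left.mpr ⟨hyF, hBF⟩)
          (by simp [Finset.mem_insert, hxy, hxB]) h)
    have hU : insert y A ∪ insert x B = insert x A ∪ insert y B := gm_union_swap A B x y
    cases b
    · -- false : SP to move
      rcases hfp with h | ⟨hnB, hall⟩
      · exact Or.inl (convA h)
      · refine Or.inr ⟨fun h => hnB (convB h), fun z hz => ?_⟩
        rw [← hU] at hz
        have hz' := hz
        simp only [Finset.mem_sdiff, Finset.mem_union, Finset.mem_insert, not_or] at hz'
        obtain ⟨hzV, ⟨hzy, hzA⟩, hzx, hzB⟩ := hz'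
        have := hall z hz
        rw [Finset.insert_comm z x B] at this
        rw [Finset.insert_comm z y B]
        exact ih A (insert z B) true hFA (hSB.trans (Finset.subset_insert z B)) hAS
          (Finset.disjoint_insert_left.mpr ⟨fun h => hzA (hFA h), hBF⟩)
          hxA (by simp [Finset.mem_insert, hzx, hxB, Ne.symm]) hyA
          (by simp [Finset.mem_insert, hzy, hyB, Ne.symm]) this
    · -- true : FP to move
      refine ⟨fun h => hfp.1 (convB h), ?_⟩
      rcases hfp.2 with h | ⟨w, hw, hf⟩
      · exact Or.inl (convA h)
      · rw [hU] at hw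
        have hw' := hw
        simp only [Finset.mem_sdiff, Finset.mem_union, Finset.mem_insert, not_or] at hw'
        obtain ⟨hwV, ⟨hwx, hwA⟩, hwy, hwB⟩ := hw'
        refine Or.inr ⟨w, hw, ?_⟩
        rw [Finset.insert_comm w y A] at hf
        rw [Finset.insert_comm w x A]
        exact ih (insert w A) B false (hFA.trans (Finset.subset_insert w A)) hSB
          (Finset.disjoint_insert_left.mpr ⟨fun h => hwB (hSB h), hAS⟩) hBF
          (by simp [Finset.mem_insert, hwx, hxA, Ne.symm])
          hxB (by simp [Finset.mem_insert, hwy, hyA, Ne.symm]) hyB hf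

theorem gm_spSwap (H : FinHypergraph α) {F S : Finset α} {x y : α}
    (hred : ∀ e ∈ H.E, Disjoint e S → y ∈ e \ F → x ∈ e \ F)
    (hblue : ∀ e ∈ H.E, Disjoint e F → y ∈ e \ S → x ∈ e \ S)
    (hxy : x ≠ y) (hyF : y ∉ F) (hyS : y ∉ S) :
    ∀ (n : ℕ) (A B : Finset α) (b : Bool), F ⊆ A → S ⊆ B →
      Disjoint A S → Disjoint B F → x ∉ A → x ∉ B → y ∉ A → y ∉ B →
      spAux H n (insert x A) (insert y B) b → spAux H n (insert y A) (insert x B) b := by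
  intro n
  induction n with
  | zero =>
    intro A B b hFA hSB hAS hBF hxA hxB hyA hyB hsp
    have convA : Fills H (insert y A) → Fills H (insert x A) := fun h =>
      gm_fills_mono H (Finset.subset_insert x A)
        (gm_useless H hred hyF (Finset.disjoint_insert_left.mpr ⟨hyS, hAS⟩)
          (by simp [Finset.mem_insert, hxy, hxA]) h)
    have convB : Fills H (insert y B) → Fills H (insert x B) := fun h =>
      gm_fills_mono H (Finset.subset_insert x B)
        (gm_useless H hblue hyS (Finset.disjoint_insert_left.mpr ⟨hyF, hBF⟩)
          (by simp [Finset.mem_insert, hxy, hxB]) h)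
    cases b
    · exact ⟨fun h => hsp.1 (convA h), convB hsp.2⟩
    · exact convB hsp
  | succ n ih =>
    intro A B b hFA hSB hAS hBF hxA hxB hyA hyB hsp
    have convA : Fills H (insert y A) → Fills H (insert x A) := fun h =>
      gm_fills_mono H (Finset.subset_insert x A)
        (gm_useless H hred hyF (Finset.disjoint_insert_left.mpr ⟨hyS, hAS⟩)
          (by simp [Finset.mem_insert, hxy, hxA]) h)
    have convB : Fills H (insert y B) → Fills H (insert x B) := fun h =>
      gm_fills_mono H (Finset.subset_insert x B)
        (gm_useless H hblue hyS (Finset.disjoint_insert_left.mpr ⟨hyF, hBF⟩)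
          (by simp [Finset.mem_insert, hxy, hxB]) h)
    have hU : insert x A ∪ insert y B = insert y A ∪ insert x B :=
      gm_union_swap A B y x
    cases b
    · -- false : SP to move
      refine ⟨fun h => hsp.1 (convA h), ?_⟩
      rcases hsp.2 with h | ⟨z, hz, hs⟩
      · exact Or.inl (convB h)
      · rw [hU] at hz
        have hz' := hz
        simp only [Finset.mem_sdiff, Finset.mem_union, Finset.mem_insert, not_or] at hz'
        obtain ⟨hzV, ⟨hzy, hzA⟩, hzx, hzB⟩ := hz'
        refine Or.inr ⟨z, hz, ?_⟩
        rw [Finset.insert_comm z y B] at hs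
        rw [Finset.insert_comm z x B]
        exact ih A (insert z B) true hFA (hSB.trans (Finset.subset_insert z B)) hAS
          (Finset.disjoint_insert_left.mpr ⟨fun h => hzA (hFA h), hBF⟩)
          hxA (by simp [Finset.mem_insert, hzx, hxB, Ne.symm]) hyA
          (by simp [Finset.mem_insert, hzy, hyB, Ne.symm]) hs
    · -- true : FP to move
      rcases hsp with h | ⟨hnA, hall⟩
      · exact Or.inl (convB h)
      · refine Or.inr ⟨fun h => hnA (convA h), fun w hw => ?_⟩
        rw [← hU] at hw
        have hw' := hw
        simp only [Finset.mem_sdiff, Finset.mem_union, Finset.mem_insert, not_or] at hw'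
        obtain ⟨hwV, ⟨hwx, hwA⟩, hwy, hwB⟩ := hw'
        have := hall w hw
        rw [Finset.insert_comm w x A] at this
        rw [Finset.insert_comm w y A]
        exact ih (insert w A) B false (hFA.trans (Finset.subset_insert w A)) hSB
          (Finset.disjoint_insert_left.mpr ⟨fun h => hwB (hSB h), hAS⟩) hBF
          (by simp [Finset.mem_insert, hwx, hxA, Ne.symm])
          hxB (by simp [Finset.mem_insert, hwy, hyA, Ne.symm]) hyB this

theorem gm_moveDom (H : FinHypergraph α) {F S : Finset α} {x y : α}
    (hred : ∀ e ∈ H.E, Disjoint e S → y ∈ e \ F → x ∈ e \ F)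
    (hblue : ∀ e ∈ H.E, Disjoint e F → y ∈ e \ S → x ∈ e \ S)
    (hxV : x ∈ H.V) (hyV : y ∈ H.V) (hxy : x ≠ y)
    (hyF : y ∉ F) (hyS : y ∉ S) :
    ∀ (n : ℕ) (A B : Finset α) (b : Bool), F ⊆ A → S ⊆ B →
      Disjoint A S → Disjoint B F → x ∉ A → x ∉ B → y ∉ A → y ∉ B →
      fpAux H n (insert y A) B b → fpAux H n (insert x A) B b := by
  intro n
  induction n with
  | zero =>
    intro A B b hFA hSB hAS hBF hxA hxB hyA hyB hfp
    have convA : Fills H (insert y A) → Fills H (insert x A) := fun h =>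
      gm_fills_mono H (Finset.subset_insert x A)
        (gm_useless H hred hyF (Finset.disjoint_insert_left.mpr ⟨hyS, hAS⟩)
          (by simp [Finset.mem_insert, hxy, hxA]) h)
    cases b
    · exact convA hfp
    · exact ⟨hfp.1, convA hfp.2⟩
  | succ n ih =>
    intro A B b hFA hSB hAS hBF hxA hxB hyA hyB hfp
    have convA : Fills H (insert y A) → Fills H (insert x A) := fun h =>
      gm_fills_mono H (Finset.subset_insert x A)
        (gm_useless H hred hyF (Finset.disjoint_insert_left.mpr ⟨hyS, hAS⟩)
          (by simp [Finset.mem_insert, hxy, hxA]) h)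
    cases b
    · -- false : SP to move
      rcases hfp with h | ⟨hnB, hall⟩
      · exact Or.inl (convA h)
      · refine Or.inr ⟨hnB, fun z hz => ?_⟩
        have hz' := hz
        simp only [Finset.mem_sdiff, Finset.mem_union, Finset.mem_insert, not_or] at hz'
        obtain ⟨hzV, ⟨hzx, hzA⟩, hzB⟩ := hz'
        by_cases hzy : z = y
        · subst hzy
          have hxmem : x ∈ H.V \ (insert z A ∪ B) := by
            simp only [Finset.mem_sdiff, Finset.mem_union, Finset.mem_insert, not_or]
            exact ⟨hxV, ⟨fun h => hxy h, hxA⟩, hxB⟩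
          exact gm_fpSwap H hred hblue hxy hyF hyS n A B true hFA hSB hAS hBF hxA hxB
            hyA hyB (hall x hxmem)
        · have hzmem : z ∈ H.V \ (insert y A ∪ B) := by
            simp only [Finset.mem_sdiff, Finset.mem_union, Finset.mem_insert, not_or]
            exact ⟨hzV, ⟨hzy, hzA⟩, hzB⟩
          exact ih A (insert z B) true hFA (hSB.trans (Finset.subset_insert z B)) hAS
            (Finset.disjoint_insert_left.mpr ⟨fun h => hzA (hFA h), hBF⟩) hxA
            (by simp [Finset.mem_insert, hzx, hxB, Ne.symm]) hyA
            (by simp [Finset.mem_insert, hzy, hyB, Ne.symm]) (hall z hzmem)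
    · -- true : FP to move
      refine ⟨hfp.1, ?_⟩
      rcases hfp.2 with h | ⟨w, hw, hf⟩
      · exact Or.inl (convA h)
      · have hw' := hw
        simp only [Finset.mem_sdiff, Finset.mem_union, Finset.mem_insert, not_or] at hw'
        obtain ⟨hwV, ⟨hwy, hwA⟩, hwB⟩ := hw'
        by_cases hwx : w = x
        · subst hwx
          refine Or.inr ⟨y, ?_, ?_⟩
          · simp only [Finset.mem_sdiff, Finset.mem_union, Finset.mem_insert, not_or]
            exact ⟨hyV, ⟨Ne.symm hxy, hyA⟩, hyB⟩
          · rw [Finset.insert_comm w y A] at hf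
            exact hf
        · refine Or.inr ⟨w, ?_, ?_⟩
          · simp only [Finset.mem_sdiff, Finset.mem_union, Finset.mem_insert, not_or]
            exact ⟨hwV, ⟨hwx, hwA⟩, hwB⟩
          · rw [Finset.insert_comm w y A] at hf
            rw [Finset.insert_comm w x A]
            exact ih (insert w A) B false (hFA.trans (Finset.subset_insert w A)) hSB
              (Finset.disjoint_insert_left.mpr ⟨fun h => hwB (hSB h), hAS⟩) hBF
              (by simp [Finset.mem_insert, hwx, hxA, Ne.symm])
              hxB (by simp [Finset.mem_insert, hwy, hyA, Ne.symm]) hyB hf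

theorem gm_fpPair (H : FinHypergraph α) {F S : Finset α} {x y : α}
    (hred : ∀ e ∈ H.E, Disjoint e S → y ∈ e \ F → x ∈ e \ F)
    (hblue : ∀ e ∈ H.E, Disjoint e F → y ∈ e \ S → x ∈ e \ S)
    (hxV : x ∈ H.V) (hyV : y ∈ H.V) (hxy : x ≠ y)
    (hyF : y ∉ F) (hyS : y ∉ S) :
    ∀ (n : ℕ) (A B : Finset α) (b : Bool), F ⊆ A → S ⊆ B →
      Disjoint A S → Disjoint B F → x ∉ A → x ∉ B → y ∉ A → y ∉ B →
      (H.V \ (A ∪ B)).card = n + 2 →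
      fpAux H (n+2) A B b → fpAux H n (insert x A) (insert y B) b := by
  intro n
  induction n using Nat.strong_induction_on with
  | _ n ih =>
  intro A B b hFA hSB hAS hBF hxA hxB hyA hyB hcard hfp
  have uB : Fills H (insert y B) → Fills H B :=
    gm_useless H hblue hyS (Finset.disjoint_insert_left.mpr ⟨hyF, hBF⟩)
      (by simp [Finset.mem_insert, hxy, hxB])
  have hymem : y ∈ H.V \ (A ∪ B) := by
    simp only [Finset.mem_sdiff, Finset.mem_union, not_or]; exact ⟨hyV, hyA, hyB⟩
  have hxmem : x ∈ H.V \ (A ∪ B) := by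
    simp only [Finset.mem_sdiff, Finset.mem_union, not_or]; exact ⟨hxV, hxA, hxB⟩
  cases b
  · -- false : SP to move
    rcases hfp with h | ⟨hnB, hall⟩
    · exact gm_fp_false H n (gm_fills_mono H (Finset.subset_insert x A) h)
    · rcases n with _ | k
      · -- n = 0 : goal is Fills (insert x A)
        have hy' := hall y hymem
        obtain ⟨hnyB, hrest⟩ := hy'
        rcases hrest with h | ⟨w, hw, hf⟩
        · exact gm_fills_mono H (Finset.subset_insert x A) h
        · have hw' := hw
          simp only [Finset.mem_sdiff, Finset.mem_union, Finset.mem_insert, not_or] at hw'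
          obtain ⟨hwV, hwA, hwy, hwB⟩ := hw'
          have hset : H.V \ (A ∪ B) = {x, y} := by
            refine (Finset.eq_of_subset_of_card_le ?_ ?_).symm
            · intro a ha
              simp only [Finset.mem_insert, Finset.mem_singleton] at ha
              rcases ha with rfl | rfl
              · exact hxmem
              · exact hymem
            · rw [hcard, Finset.card_insert_of_notMem (by simp [hxy]),
                Finset.card_singleton]
          have hwmem : w ∈ H.V \ (A ∪ B) := by
            simp only [Finset.mem_sdiff, Finset.mem_union, not_or]; exact ⟨hwV, hwA, hwB⟩
          rw [hset] at hwmem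
          simp only [Finset.mem_insert, Finset.mem_singleton] at hwmem
          rcases hwmem with rfl | rfl
          · exact hf
          · exact absurd rfl hwy
      · -- n = k+1
        have hnyB : ¬ Fills H (insert y B) := fun h => hnB (uB h)
        refine Or.inr ⟨hnyB, fun z hz => ?_⟩
        have hz' := hz
        simp only [Finset.mem_sdiff, Finset.mem_union, Finset.mem_insert, not_or] at hz'
        obtain ⟨hzV, ⟨hzx, hzA⟩, hzy, hzB⟩ := hz'
        have hz2 : z ∈ H.V \ (A ∪ B) := by
          simp only [Finset.mem_sdiff, Finset.mem_union, not_or]; exact ⟨hzV, hzA, hzB⟩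
        have hzcard : (H.V \ (A ∪ insert z B)).card = k + 2 := by
          rw [gm_sdiff_insert_right, Finset.card_erase_of_mem hz2, hcard]; omega
        rw [Finset.insert_comm z y B]
        exact ih k (by omega) A (insert z B) true hFA
          (hSB.trans (Finset.subset_insert z B)) hAS
          (Finset.disjoint_insert_left.mpr ⟨fun h => hzA (hFA h), hBF⟩) hxA
          (by simp [Finset.mem_insert, hzx, hxB, Ne.symm]) hyA
          (by simp [Finset.mem_insert, hzy, hyB, Ne.symm]) hzcard (hall z hz2)
  · -- true : FP to move
    obtain ⟨hnB, hrest⟩ := hfp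
    have hnyB : ¬ Fills H (insert y B) := fun h => hnB (uB h)
    rcases hrest with h | ⟨w, hw, hf⟩
    · exact gm_fp_true H n hnyB (gm_fills_mono H (Finset.subset_insert x A) h)
    · have hstep : fpAux H (n+1) (insert x A) B false →
          fpAux H n (insert x A) (insert y B) true := by
        intro hf'
        rcases hf' with h | ⟨hnB', hall⟩
        · exact gm_fp_true H n hnyB h
        · exact hall y (by
            simp only [Finset.mem_sdiff, Finset.mem_union, Finset.mem_insert, not_or]
            exact ⟨hyV, ⟨Ne.symm hxy, hyA⟩, hyB⟩)
      have hw' := hw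
      simp only [Finset.mem_sdiff, Finset.mem_union, not_or] at hw'
      obtain ⟨hwV, hwA, hwB⟩ := hw'
      by_cases hwx : w = x
      · subst hwx; exact hstep hf
      · by_cases hwy : w = y
        · subst hwy
          exact hstep (gm_moveDom H hred hblue hxV hyV hxy hyF hyS (n+1) A B false
            hFA hSB hAS hBF hxA hxB hyA hyB hf)
        · -- w ∉ {x, y} : then n ≥ 1
          have hsub3 : ({x, y, w} : Finset α) ⊆ H.V \ (A ∪ B) := by
            intro a ha
            simp only [Finset.mem_insert, Finset.mem_singleton] at ha
            rcases ha with rfl | rfl | rfl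
            · exact hxmem
            · exact hymem
            · simp only [Finset.mem_sdiff, Finset.mem_union, not_or]
              exact ⟨hwV, hwA, hwB⟩
          have hc3 : 3 ≤ (H.V \ (A ∪ B)).card := by
            have hle := Finset.card_le_card hsub3
            have : ({x, y, w} : Finset α).card = 3 := by
              rw [Finset.card_insert_of_notMem (by
                  simp only [Finset.mem_insert, Finset.mem_singleton, not_or]
                  exact ⟨hxy, Ne.symm hwx⟩),
                Finset.card_insert_of_notMem (by
                  simp only [Finset.mem_singleton]
                  exact Ne.symm hwy),
                Finset.card_singleton]
            omega
          obtain ⟨k, rfl⟩ : ∃ k, n = k + 1 := by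
            rcases n with _ | k
            · omega
            · exact ⟨k, rfl⟩
          have hwmem2 : w ∈ H.V \ (A ∪ B) := by
            simp only [Finset.mem_sdiff, Finset.mem_union, not_or]; exact ⟨hwV, hwA, hwB⟩
          have hwcard : (H.V \ (insert w A ∪ B)).card = k + 2 := by
            rw [gm_sdiff_insert_left, Finset.card_erase_of_mem hwmem2, hcard]; omega
          refine ⟨hnyB, Or.inr ⟨w, ?_, ?_⟩⟩
          · simp only [Finset.mem_sdiff, Finset.mem_union, Finset.mem_insert, not_or]
            exact ⟨hwV, ⟨hwx, hwA⟩, hwy, hwB⟩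
          · rw [Finset.insert_comm w x A]
            exact ih k (by omega) (insert w A) B false
              (hFA.trans (Finset.subset_insert w A)) hSB
              (Finset.disjoint_insert_left.mpr ⟨fun h => hwB (hSB h), hAS⟩) hBF
              (by simp [Finset.mem_insert, hwx, hxA, Ne.symm])
              hxB (by simp [Finset.mem_insert, hwy, hyA, Ne.symm]) hyB hwcard hf

theorem gm_spPair (H : FinHypergraph α) {F S : Finset α} {x y : α}
    (hred : ∀ e ∈ H.E, Disjoint e S → y ∈ e \ F → x ∈ e \ F)
    (hblue : ∀ e ∈ H.E, Disjoint e F → y ∈ e \ S → x ∈ e \ S)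
    (hxV : x ∈ H.V) (hyV : y ∈ H.V) (hxy : x ≠ y)
    (hyF : y ∉ F) (hyS : y ∉ S) :
    ∀ (n : ℕ) (A B : Finset α) (b : Bool), F ⊆ A → S ⊆ B →
      Disjoint A S → Disjoint B F → x ∉ A → x ∉ B → y ∉ A → y ∉ B →
      (H.V \ (A ∪ B)).card = n + 2 →
      spAux H n (insert x A) (insert y B) b → spAux H (n+2) A B b := by
  intro n
  induction n using Nat.strong_induction_on with
  | _ n ih =>
  intro A B b hFA hSB hAS hBF hxA hxB hyA hyB hcard hsp
  have uB : Fills H (insert y B) → Fills H B :=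
    gm_useless H hblue hyS (Finset.disjoint_insert_left.mpr ⟨hyF, hBF⟩)
      (by simp [Finset.mem_insert, hxy, hxB])
  have convA : Fills H (insert y A) → Fills H (insert x A) := fun h =>
    gm_fills_mono H (Finset.subset_insert x A)
      (gm_useless H hred hyF (Finset.disjoint_insert_left.mpr ⟨hyS, hAS⟩)
        (by simp [Finset.mem_insert, hxy, hxA]) h)
  cases b
  · -- false : SP to move
    rcases n with _ | k
    · exact ⟨fun h => hsp.1 (gm_fills_mono H (Finset.subset_insert x A) h),
        Or.inl (uB hsp.2)⟩
    · refine ⟨fun h => hsp.1 (gm_fills_mono H (Finset.subset_insert x A) h), ?_⟩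
      rcases hsp.2 with h | ⟨z, hz, hsz⟩
      · exact Or.inl (uB h)
      · have hz' := hz
        simp only [Finset.mem_sdiff, Finset.mem_union, Finset.mem_insert, not_or] at hz'
        obtain ⟨hzV, ⟨hzx, hzA⟩, hzy, hzB⟩ := hz'
        have hz2 : z ∈ H.V \ (A ∪ B) := by
          simp only [Finset.mem_sdiff, Finset.mem_union, not_or]; exact ⟨hzV, hzA, hzB⟩
        refine Or.inr ⟨z, hz2, ?_⟩
        rw [Finset.insert_comm z y B] at hsz
        have hzcard : (H.V \ (A ∪ insert z B)).card = k + 2 := by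
          rw [gm_sdiff_insert_right, Finset.card_erase_of_mem hz2, hcard]; omega
        exact ih k (by omega) A (insert z B) true hFA
          (hSB.trans (Finset.subset_insert z B)) hAS
          (Finset.disjoint_insert_left.mpr ⟨fun h => hzA (hFA h), hBF⟩) hxA
          (by simp [Finset.mem_insert, hzx, hxB, Ne.symm]) hyA
          (by simp [Finset.mem_insert, hzy, hyB, Ne.symm]) hzcard hsz
  · -- true : FP to move
    rcases n with _ | k
    · exact Or.inl (uB hsp)
    · have hsp0 := hsp
      rcases hsp with h | ⟨hnxA, hall'⟩
      · exact Or.inl (uB h)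
      · refine Or.inr ⟨fun h => hnxA (gm_fills_mono H (Finset.subset_insert x A) h),
          fun w hw => ?_⟩
        have hw' := hw
        simp only [Finset.mem_sdiff, Finset.mem_union, not_or] at hw'
        obtain ⟨hwV, hwA, hwB⟩ := hw'
        by_cases hwx : w = x
        · subst hwx
          refine ⟨hnxA, Or.inr ⟨y, ?_, ?_⟩⟩
          · simp only [Finset.mem_sdiff, Finset.mem_union, Finset.mem_insert, not_or]
            exact ⟨hyV, ⟨Ne.symm hxy, hyA⟩, hyB⟩
          · exact hsp0
        · by_cases hwy : w = y
          · subst hwy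
            refine ⟨fun h => hnxA (convA h), Or.inr ⟨x, ?_, ?_⟩⟩
            · simp only [Finset.mem_sdiff, Finset.mem_union, Finset.mem_insert, not_or]
              exact ⟨hxV, ⟨hxy, hxA⟩, hxB⟩
            · exact gm_spSwap H hred hblue hxy hyF hyS (k+1) A B true hFA hSB hAS hBF
                hxA hxB hwA hwB hsp0
          · have hwmem' : w ∈ H.V \ (insert x A ∪ insert y B) := by
              simp only [Finset.mem_sdiff, Finset.mem_union, Finset.mem_insert, not_or]
              exact ⟨hwV, ⟨hwx, hwA⟩, hwy, hwB⟩
            have hsw := hall' w hwmem'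
            rw [Finset.insert_comm w x A] at hsw
            rcases k with _ | j
            · exact ⟨fun h => hsw.1 (gm_fills_mono H (Finset.subset_insert x _) h),
                Or.inl (uB hsw.2)⟩
            · refine ⟨fun h => hsw.1 (gm_fills_mono H (Finset.subset_insert x _) h), ?_⟩
              rcases hsw.2 with h | ⟨z', hz', hsz⟩
              · exact Or.inl (uB h)
              · have hz'' := hz'
                simp only [Finset.mem_sdiff, Finset.mem_union, Finset.mem_insert,
                  not_or] at hz''
                obtain ⟨hzV, ⟨hzx, hzw, hzA⟩, hzy, hzB⟩ := hz''
                have hz2 : z' ∈ H.V \ (A ∪ B) := by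
                  simp only [Finset.mem_sdiff, Finset.mem_union, not_or]
                  exact ⟨hzV, hzA, hzB⟩
                have hw2 : w ∈ H.V \ (A ∪ B) := by
                  simp only [Finset.mem_sdiff, Finset.mem_union, not_or]
                  exact ⟨hwV, hwA, hwB⟩
                refine Or.inr ⟨z', ?_, ?_⟩
                · simp only [Finset.mem_sdiff, Finset.mem_union, Finset.mem_insert, not_or]
                  exact ⟨hzV, ⟨hzw, hzA⟩, hzB⟩
                · rw [Finset.insert_comm z' y B] at hsz
                  have hcard2 : (H.V \ (insert w A ∪ insert z' B)).card = j + 2 := by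
                    rw [gm_sdiff_insert_left, gm_sdiff_insert_right,
                      Finset.card_erase_of_mem
                        (Finset.mem_erase.mpr ⟨fun h => hzw h.symm, hw2⟩),
                      Finset.card_erase_of_mem hz2, hcard]
                    omega
                  exact ih j (by omega) (insert w A) (insert z' B) true
                    (hFA.trans (Finset.subset_insert w A))
                    (hSB.trans (Finset.subset_insert z' B))
                    (Finset.disjoint_insert_left.mpr ⟨fun h => hwB (hSB h), hAS⟩)
                    (Finset.disjoint_insert_left.mpr ⟨fun h => hzA (hFA h), hBF⟩)
                    (by simp [Finset.mem_insert, hwx, hxA, Ne.symm])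
                    (by simp [Finset.mem_insert, hzx, hxB, Ne.symm])
                    (by simp [Finset.mem_insert, hwy, hyA, Ne.symm])
                    (by simp [Finset.mem_insert, hzy, hyB, Ne.symm]) hcard2 hsz

/-- (Greedy move for Maker-Maker.) Let `(F, S)` be an intermediate
position of the Maker-Maker game on `H` with FP to move: `F, S ⊆ V(H)` disjoint with
`|F| = |S|`, and no edge contained in `F` nor in `S`.  Let `x ≠ y` be unpicked vertices
such that every updated edge (red: `e \ F` for `e` disjoint from `S`; blue: `e \ S` for `e`
disjoint from `F`) containing `y` also contains `x`, and such that after FP picks `x`,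
every SP answer other than `y` leads to a position from which FP has a winning strategy.
Then FP (resp. SP) has a winning strategy from `(F, S)` iff FP (resp. SP) has a winning
strategy from `(F ∪ {x}, S ∪ {y})` (FP to move in both positions). -/
theorem greedy_move_maker_maker (H : FinHypergraph α) (F S : Finset α) (x y : α)
    (hF : F ⊆ H.V) (hS : S ⊆ H.V) (hdisj : Disjoint F S) (hcard : F.card = S.card)
    (hFok : ¬ Fills H F) (hSok : ¬ Fills H S)
    (hx : x ∈ H.V \ (F ∪ S)) (hy : y ∈ H.V \ (F ∪ S)) (hxy : x ≠ y)
    (hred : ∀ e ∈ H.E, Disjoint e S → y ∈ e \ F → x ∈ e \ F)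
    (hblue : ∀ e ∈ H.E, Disjoint e F → y ∈ e \ S → x ∈ e \ S)
    (hforce : ∀ z ∈ H.V \ (insert x F ∪ S), z ≠ y →
      fpAux H ((H.V \ (insert x F ∪ insert z S)).card) (insert x F) (insert z S) true) :
    (fpAux H ((H.V \ (F ∪ S)).card) F S true ↔
      fpAux H ((H.V \ (insert x F ∪ insert y S)).card) (insert x F) (insert y S) true) ∧
    (spAux H ((H.V \ (F ∪ S)).card) F S true ↔
      spAux H ((H.V \ (insert x F ∪ insert y S)).card) (insert x F) (insert y S) true) := by
  have hx' := hx
  have hy' := hy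
  simp only [Finset.mem_sdiff, Finset.mem_union, not_or] at hx' hy'
  obtain ⟨hxV, hxF, hxS⟩ := hx'
  obtain ⟨hyV, hyF, hyS⟩ := hy'
  set m := (H.V \ (insert x F ∪ insert y S)).card with hm
  have h1 : H.V \ (insert x F ∪ insert y S) = ((H.V \ (F ∪ S)).erase y).erase x := by
    rw [gm_sdiff_insert_left, gm_sdiff_insert_right]
  have hxe : x ∈ (H.V \ (F ∪ S)).erase y := Finset.mem_erase.mpr ⟨hxy, hx⟩
  have hc1 := Finset.card_erase_add_one hxe
  have hc2 := Finset.card_erase_add_one hy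
  have hNm : (H.V \ (F ∪ S)).card = m + 2 := by rw [hm, h1]; omega
  have key : ∀ z ∈ H.V \ (insert x F ∪ S),
      (H.V \ (insert x F ∪ insert z S)).card = m := by
    intro z hz
    rw [gm_sdiff_insert_right, Finset.card_erase_of_mem hz, gm_sdiff_insert_left,
      Finset.card_erase_of_mem hx, hNm]
    omega
  refine ⟨⟨?_, ?_⟩, ⟨?_, ?_⟩⟩
  · -- FP : G → G'
    intro h
    rw [hNm] at h
    exact gm_fpPair H hred hblue hxV hyV hxy hyF hyS m F S true
      (Finset.Subset.refl F) (Finset.Subset.refl S) hdisj hdisj.symm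
      hxF hxS hyF hyS hNm h
  · -- FP : G' → G
    intro h
    rw [hNm]
    show ¬ Fills H S ∧ (Fills H F ∨
      ∃ w ∈ H.V \ (F ∪ S), fpAux H (m+1) (insert w F) S false)
    refine ⟨hSok, Or.inr ⟨x, hx, ?_⟩⟩
    show Fills H (insert x F) ∨ (¬ Fills H S ∧
      ∀ z ∈ H.V \ (insert x F ∪ S), fpAux H m (insert x F) (insert z S) true)
    refine Or.inr ⟨hSok, fun z hz => ?_⟩
    by_cases hzy : z = y
    · subst hzy; exact h
    · have hfz := hforce z hz hzy
      rw [key z hz] at hfz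
      exact hfz
  · -- SP : G → G'
    intro h
    rw [hNm] at h
    rcases h with h | ⟨hnF, hall⟩
    · exact absurd h hSok
    · obtain ⟨hnxF, h2⟩ := hall x hx
      rcases h2 with h | ⟨z, hz, hsz⟩
      · exact absurd h hSok
      · by_cases hzy : z = y
        · subst hzy; exact hsz
        · have hfz := hforce z hz hzy
          rw [key z hz] at hfz
          exact (gm_noboth H m _ _ _ hfz hsz).elim
  · -- SP : G' → G
    intro h
    rw [hNm]
    exact gm_spPair H hred hblue hxV hyV hxy hyF hyS m F S true
      (Finset.Subset.refl F) (Finset.Subset.refl S) hdisj hdisj.symm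
      hxF hxS hyF hyS hNm h
end
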